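/- Assume the standard setup, and let ℓ ≥ 3 be an integer with q ≡ 2^ℓ − 1 (mod 2^{ℓ+1}). Let L be the unique subfield of F with q elements, let m = (q0−1)/2, and let H_m be the unique subgroup of Fˣ of order m(q+1). Suppose that for every α ∈ L with α ≠ 0 there exist x1, x2, x3, y1, y2, y3 ∈ L satisfying x1 + x2 + x3 = α, y1 + y2 + y3 = 0, x1² + y1² = 1, x2² + y2² = 1, and x3² + y3² = 1. Then every γ ∈ Fˣ satisfying (γ^{q−1})^{2^{ℓ−1}} = 1 can be written as γ = h1 + h2 + h3 (an equality in F) with h1, h2, h3 ∈ H_m. -/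

import Mathlib

open Polynomial in
private lemma aux_subgroup_mem_of_pow {F : Type*} [Field F] [Fintype F]
    (S : Subgroup Fˣ) (d : ℕ) (hd : 0 < d) (hcard : Nat.card S = d)
    (u : Fˣ) (hu : u ^ d = 1) : u ∈ S := by
  classical
  let f : S → F := fun h => ((h : Fˣ) : F)
  have hinj : Function.Injective f := by
    intro a b hab
    exact Subtype.ext (Units.ext hab)
  let T : Finset F := Finset.univ.image f
  have hTcard : T.card = d := by
    rw [Finset.card_image_of_injective _ hinj, Finset.card_univ,
      ← Nat.card_eq_fintype_card, hcard]
  have hsub : T ⊆ (nthRoots d (1 : F)).toFinset := by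
    intro x hx
    obtain ⟨h, -, rfl⟩ := Finset.mem_image.1 hx
    rw [Multiset.mem_toFinset, mem_nthRoots hd]
    have h1 : h ^ d = 1 := by rw [← hcard]; exact pow_card_eq_one'
    have h2 : ((h : Fˣ) : F) ^ d = (((h ^ d : S) : Fˣ) : F) := by push_cast; ring
    rw [h2, h1]; simp [f]
  have hroots : (nthRoots d (1 : F)).toFinset.card ≤ d :=
    le_trans (Multiset.toFinset_card_le _) (card_nthRoots d 1)
  have hTeq : T = (nthRoots d (1 : F)).toFinset :=
    Finset.eq_of_subset_of_card_le hsub (by rw [hTcard]; exact hroots)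
  have hmem : (u : F) ∈ T := by
    rw [hTeq, Multiset.mem_toFinset, mem_nthRoots hd]
    have := congrArg (Units.val) hu
    push_cast at this
    exact this
  obtain ⟨h, -, hh⟩ := Finset.mem_image.1 hmem
  have : (h : Fˣ) = u := Units.ext hh
  rw [← this]; exact h.2

open Polynomial in
private lemma aux_subfield_mem_of_pow {F : Type*} [Field F] [Fintype F]
    (L : Subfield F) (n : ℕ) (hn : 0 < n) (hcard : Nat.card L = n + 1)
    (x : F) (hx : x ^ n = 1) : x ∈ L := by
  classical
  letI : Fintype L := Fintype.ofFinite L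
  have hcards : Fintype.card L = n + 1 := by rw [← Nat.card_eq_fintype_card, hcard]
  have hcardu : Fintype.card Lˣ = n := by rw [Fintype.card_units, hcards]; omega
  let f : Lˣ → F := fun h => ((h : L) : F)
  have hinj : Function.Injective f := by
    intro a b hab
    exact Units.ext (Subtype.ext hab)
  let T : Finset F := Finset.univ.image f
  have hTcard : T.card = n := by
    rw [Finset.card_image_of_injective _ hinj, Finset.card_univ, hcardu]
  have hsub : T ⊆ (nthRoots n (1 : F)).toFinset := by
    intro y hy
    obtain ⟨h, -, rfl⟩ := Finset.mem_image.1 hy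
    rw [Multiset.mem_toFinset, mem_nthRoots hn]
    have h1 : h ^ n = 1 := by rw [← hcardu]; exact pow_card_eq_one
    have h2 : ((h : L) : F) ^ n = (((h ^ n : Lˣ) : L) : F) := by push_cast; ring
    rw [h2, h1]; simp [f]
  have hroots : (nthRoots n (1 : F)).toFinset.card ≤ n :=
    le_trans (Multiset.toFinset_card_le _) (card_nthRoots n 1)
  have hTeq : T = (nthRoots n (1 : F)).toFinset :=
    Finset.eq_of_subset_of_card_le hsub (by rw [hTcard]; exact hroots)
  have hmem : x ∈ T := by
    rw [hTeq, Multiset.mem_toFinset, mem_nthRoots hn]; exact hx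
  obtain ⟨h, -, hh⟩ := Finset.mem_image.1 hmem
  rw [← hh]; exact (h : L).2

private lemma aux_subfield_sqrt {F : Type*} [Field F] [Fintype F]
    (L : Subfield F) (q : ℕ) (hq : Odd q) (hq1 : 1 < q) (hcard : Nat.card L = q)
    (x : F) (hxL : x ∈ L) (hx0 : x ≠ 0) (hx : x ^ ((q - 1) / 2) = 1) :
    ∃ a : F, a ∈ L ∧ a ≠ 0 ∧ a ^ 2 = x := by
  classical
  letI : Fintype L := Fintype.ofFinite L
  have hcards : Fintype.card L = q := by rw [← Nat.card_eq_fintype_card, hcard]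
  have hchar : ringChar L ≠ 2 := by
    intro h
    have := FiniteField.even_card_of_char_two h
    rw [hcards] at this
    obtain ⟨r, hr⟩ := hq
    omega
  set b : L := ⟨x, hxL⟩ with hb
  have hb0 : b ≠ 0 := fun h => hx0 (by simpa [hb, Subtype.ext_iff] using h)
  have hbpow : b ^ (Fintype.card L / 2) = 1 := by
    have h2 : Fintype.card L / 2 = (q - 1) / 2 := by
      obtain ⟨r, hr⟩ := hq; rw [hcards]; omega
    rw [h2]
    apply Subtype.ext
    push_cast
    exact hx
  obtain ⟨c, hc⟩ := (FiniteField.isSquare_iff hchar hb0).2 hbpow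
  refine ⟨(c : F), c.2, ?_, ?_⟩
  · intro h
    apply hx0
    have : c = 0 := Subtype.ext h
    rw [this, mul_zero] at hc
    simpa [hb, Subtype.ext_iff] using hc
  · have := congrArg (Subtype.val) hc
    push_cast at this
    rw [sq, ← this]

/-- Standard setup, `ℓ ≥ 3`, `q ≡ 2^ℓ − 1 (mod 2^(ℓ+1))`. If for every nonzero `α`
in the subfield `L` of cardinality `q` the system
`x1+x2+x3 = α`, `y1+y2+y3 = 0`, `xi² + yi² = 1` is solvable in `L`, then every
`γ ∈ Fˣ` with `(γ^(q−1))^(2^(ℓ−1)) = 1` is a sum of three elements of `H_m`. -/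
theorem propertyPi_even_of_system (q0 s q ℓ : ℕ) (hq0 : IsPrimePow q0)
    (hq0odd : Odd q0) (hs : Odd s) (hq : q = q0 ^ s) (hℓ : 3 ≤ ℓ)
    (hqmod : q ≡ 2 ^ ℓ - 1 [MOD 2 ^ (ℓ + 1)])
    (F : Type*) [Field F] [Fintype F] (hF : Fintype.card F = q ^ 2)
    (L : Subfield F) (hL : Nat.card L = q)
    (m : ℕ) (hm : m = (q0 - 1) / 2)
    (Hm : Subgroup Fˣ) (hHm : Nat.card Hm = m * (q + 1))
    (hsys : ∀ α : F, α ∈ L → α ≠ 0 →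
      ∃ x1 x2 x3 y1 y2 y3 : F,
        x1 ∈ L ∧ x2 ∈ L ∧ x3 ∈ L ∧ y1 ∈ L ∧ y2 ∈ L ∧ y3 ∈ L ∧
        x1 + x2 + x3 = α ∧ y1 + y2 + y3 = 0 ∧
        x1 ^ 2 + y1 ^ 2 = 1 ∧ x2 ^ 2 + y2 ^ 2 = 1 ∧ x3 ^ 2 + y3 ^ 2 = 1) :
    ∀ γ : Fˣ, (γ ^ (q - 1)) ^ 2 ^ (ℓ - 1) = 1 →
      ∃ h1 h2 h3 : Fˣ, h1 ∈ Hm ∧ h2 ∈ Hm ∧ h3 ∈ Hm ∧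
        (h1 : F) + (h2 : F) + (h3 : F) = (γ : F) := by
  classical
  intro γ hγ
  obtain ⟨p, k, hp, hk, hpk⟩ := hq0
  have hp' : Nat.Prime p := hp.nat_prime
  haveI : Fact p.Prime := ⟨hp'⟩
  obtain ⟨t, rfl⟩ : ∃ t, ℓ = t + 3 := ⟨ℓ - 3, by omega⟩
  set A := 2 ^ t with hA
  have hApos : 0 < A := (Nat.pow_pos (by norm_num) : 0 < 2 ^ t)
  -- arithmetic consequences of the congruence
  have hmod : q % (2 ^ (t + 3 + 1)) = 2 ^ (t + 3) - 1 := by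
    have h1 : (2 ^ (t + 3) - 1) % 2 ^ (t + 3 + 1) = 2 ^ (t + 3) - 1 := by
      apply Nat.mod_eq_of_lt
      have : (2:ℕ) ^ (t + 3) < 2 ^ (t + 3 + 1) := by
        apply Nat.pow_lt_pow_right (by norm_num) (by omega)
      omega
    have h2 := hqmod
    unfold Nat.ModEq at h2
    omega
  have h16A : (2:ℕ) ^ (t + 3 + 1) = 16 * A := by rw [hA, pow_add, pow_add]; ring
  have h8A : (2:ℕ) ^ (t + 3) = 8 * A := by rw [hA, pow_add]; ring
  have h4A : (2:ℕ) ^ (t + 2) = 4 * A := by rw [hA, pow_add]; ring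
  obtain ⟨c, hc⟩ : ∃ c, q = 2 ^ (t + 3 + 1) * c + (2 ^ (t + 3) - 1) :=
    ⟨q / 2 ^ (t + 3 + 1), by rw [← hmod]; exact (Nat.div_add_mod q _).symm⟩
  set D := A * c with hDdef
  have hD : (2:ℕ) ^ (t + 3 + 1) * c = 16 * D := by rw [hDdef, h16A]; ring
  have hqc' : q + 1 = 16 * D + 8 * A := by omega
  have hq7 : 7 ≤ q := by omega
  have hq4 : q % 4 = 3 := by omega
  have hqodd : Odd q := by rw [hq]; exact hq0odd.pow
  obtain ⟨r, hr⟩ := hqodd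
  -- γ ^ ((q-1) * ((q+1)/2)) = 1
  have hexp : (γ : Fˣ) ^ ((q - 1) * 2 ^ (t + 2)) = 1 := by
    rw [pow_mul]
    have : t + 3 - 1 = t + 2 := by omega
    rw [this] at hγ
    exact hγ
  have hdvd : (q - 1) * 2 ^ (t + 2) ∣ (q - 1) * ((q + 1) / 2) := by
    apply Nat.mul_dvd_mul_left
    rw [h4A]
    refine ⟨2 * c + 1, ?_⟩
    have h5 : (q + 1) / 2 = 8 * D + 4 * A := by omega
    rw [h5, hDdef]; ring
  have hγhalf : γ ^ ((q - 1) * ((q + 1) / 2)) = 1 := by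
    obtain ⟨d, hd⟩ := hdvd
    rw [hd, pow_mul, hexp, one_pow]
  -- β := γ^(q+1) lies in L and is a square there
  set β : Fˣ := γ ^ (q + 1) with hβ
  have cardFx : Fintype.card Fˣ = q ^ 2 - 1 := by rw [Fintype.card_units, hF]
  have hγall : γ ^ (q ^ 2 - 1) = 1 := by rw [← cardFx]; exact pow_card_eq_one
  have hqq : (q + 1) * (q - 1) = q ^ 2 - 1 := by
    have h2 : q ^ 2 = q * q := sq q
    have h3 : (q + 1) * (q - 1) = q * q - 1 := by
      rw [hr]
      have : 2 * r + 1 - 1 = 2 * r := by omega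
      rw [this]
      have h4 : (2 * r + 1 + 1) * (2 * r) = (2 * r + 1) * (2 * r + 1) - 1 := by
        have : (2 * r + 1) * (2 * r + 1) = (2 * r + 1 + 1) * (2 * r) + 1 := by ring
        omega
      exact h4
    omega
  have hβq1 : β ^ (q - 1) = 1 := by rw [hβ, ← pow_mul, hqq]; exact hγall
  have hβhalf : β ^ ((q - 1) / 2) = 1 := by
    rw [hβ, ← pow_mul]
    have : (q + 1) * ((q - 1) / 2) = (q - 1) * ((q + 1) / 2) := by
      have e1 : (q - 1) / 2 = r := by omega
      have e2 : (q + 1) / 2 = r + 1 := by omega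
      have e3 : q - 1 = 2 * r := by omega
      rw [e1, e2, e3, hr]; ring
    rw [this]; exact hγhalf
  have hβL : (β : F) ∈ L := by
    apply aux_subfield_mem_of_pow L (q - 1) (by omega) (by rw [hL]; omega)
    have := congrArg Units.val hβq1
    push_cast at this
    exact this
  obtain ⟨α, hαL, hα0, hα2⟩ :=
    aux_subfield_sqrt L q ⟨r, hr⟩ (by omega) hL (β : F) hβL (Units.ne_zero β)
      (by have := congrArg Units.val hβhalf; push_cast at this; exact this)
  -- powers of elements of L
  have hLpow : ∀ x : F, x ∈ L → x ^ q = x := by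
    intro x hx
    letI : Fintype L := Fintype.ofFinite L
    have hcards : Fintype.card L = q := by rw [← Nat.card_eq_fintype_card, hL]
    have h1 := FiniteField.pow_card (⟨x, hx⟩ : L)
    rw [hcards] at h1
    have h2 := congrArg Subtype.val h1
    push_cast at h2
    exact h2
  have hαq1 : α ^ (q - 1) = 1 := by
    have h1 : α ^ (q - 1) * α = 1 * α := by
      rw [one_mul, ← pow_succ]
      have : q - 1 + 1 = q := by omega
      rw [this]; exact hLpow α hαL
    exact mul_right_cancel₀ hα0 h1
  set αu : Fˣ := Units.mk0 α hα0 with hαu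
  have hαuq : αu ^ (q + 1) = β := by
    apply Units.ext
    push_cast
    show α ^ (q + 1) = (β : F)
    have h6 : q + 1 = (q - 1) + 2 := by omega
    rw [h6, pow_add, hαq1, one_mul, hα2]
  set z : Fˣ := γ * αu⁻¹ with hz
  have hz1 : z ^ (q + 1) = 1 := by
    rw [hz, mul_pow, inv_pow, hαuq, ← hβ, mul_inv_eq_one]
  have hzF : (z : F) ^ (q + 1) = 1 := by
    have := congrArg Units.val hz1; push_cast at this; exact this
  -- characteristic and Frobenius
  haveI hcharP : CharP F p := by
    obtain ⟨n, hpr, hcardF⟩ := FiniteField.card F (ringChar F)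
    have hpow : ringChar F ^ (n : ℕ) = p ^ (k * s * 2) := by
      rw [← hcardF, hF, hq, ← hpk, ← pow_mul, ← pow_mul, mul_assoc]
    have hdvdp : ringChar F ∣ p ^ (k * s * 2) := by
      rw [← hpow]
      exact dvd_pow_self _ (by exact_mod_cast n.pos.ne')
    have : ringChar F = p :=
      (Nat.prime_dvd_prime_iff_eq hpr hp').1 (hpr.dvd_of_dvd_pow hdvdp)
    exact this ▸ ringChar.charP F
  have hfrob : ∀ a b : F, (a + b) ^ q = a ^ q + b ^ q := by
    intro a b
    have hqp : q = p ^ (k * s) := by rw [hq, ← hpk, ← pow_mul]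
    rw [hqp]
    exact add_pow_char_pow a b p (k * s)
  -- a square root of -1
  have hsqneg : IsSquare (-1 : F) := by
    rw [FiniteField.isSquare_neg_one_iff, hF]
    have : q ^ 2 = 4 * (r * r + r) + 1 := by rw [hr]; ring
    omega
  obtain ⟨i, hi⟩ := hsqneg
  have hi2 : i ^ 2 = -1 := by rw [sq, ← hi]
  have hi4 : i ^ 4 = 1 := by
    have : i ^ 4 = (i ^ 2) ^ 2 := by ring
    rw [this, hi2]; ring
  have hiq : i ^ q = -i := by
    obtain ⟨c4, hc4⟩ : ∃ c4, q = 4 * c4 + 3 := ⟨q / 4, by omega⟩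
    rw [hc4, pow_add, pow_mul, hi4, one_pow, one_mul]
    have h7 : i ^ 3 = i ^ 2 * i := by ring
    rw [h7, hi2]; ring
  -- the circle lemma
  have hcirc : ∀ x y : F, x ∈ L → y ∈ L → (x + i * y) ^ (q + 1) = x ^ 2 + y ^ 2 := by
    intro x y hx hy
    have h1 : (x + i * y) ^ q = x - i * y := by
      rw [hfrob, mul_pow, hiq, hLpow x hx, hLpow y hy]; ring
    rw [pow_succ, h1]
    have h2 : (x - i * y) * (x + i * y) = x ^ 2 - i ^ 2 * y ^ 2 := by ring
    rw [h2, hi2]; ring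
  -- positivity of m*(q+1)
  have hq03 : 3 ≤ q0 := by
    have h2 : 2 ≤ q0 := by
      rw [← hpk]
      calc 2 ≤ p := hp'.two_le
        _ ≤ p ^ k := Nat.le_self_pow (by omega) p
    obtain ⟨r0, hr0⟩ := hq0odd
    omega
  have hmpos : 0 < m * (q + 1) := by
    have : 1 ≤ m := by rw [hm]; omega
    positivity
  -- membership constructor
  have key : ∀ x y : F, x ∈ L → y ∈ L → x ^ 2 + y ^ 2 = 1 →
      ∃ u : Fˣ, (u : F) = (x + i * y) * (z : F) ∧ u ∈ Hm := by
    intro x y hx hy hxy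
    have hne : x + i * y ≠ 0 := by
      intro h0
      have hcc := hcirc x y hx hy
      rw [h0, hxy, zero_pow (by omega : q + 1 ≠ 0)] at hcc
      exact one_ne_zero hcc.symm
    refine ⟨Units.mk0 _ hne * z, by rw [Units.val_mul, Units.val_mk0], ?_⟩
    apply aux_subgroup_mem_of_pow Hm (m * (q + 1)) hmpos hHm
    have hu1 : (Units.mk0 _ hne * z) ^ (q + 1) = 1 := by
      apply Units.ext
      rw [Units.val_pow_eq_pow_val, Units.val_mul, Units.val_mk0, mul_pow,
        hcirc x y hx hy, hxy, hzF, one_mul, Units.val_one]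
    rw [mul_comm m, pow_mul, hu1, one_pow]
  obtain ⟨x1, x2, x3, y1, y2, y3, hx1, hx2, hx3, hy1, hy2, hy3, hsx, hsy, hc1, hc2, hc3⟩ :=
    hsys α hαL hα0
  obtain ⟨u1, hu1v, hu1m⟩ := key x1 y1 hx1 hy1 hc1
  obtain ⟨u2, hu2v, hu2m⟩ := key x2 y2 hx2 hy2 hc2
  obtain ⟨u3, hu3v, hu3m⟩ := key x3 y3 hx3 hy3 hc3
  refine ⟨u1, u2, u3, hu1m, hu2m, hu3m, ?_⟩
  have hzval : (z : F) = (γ : F) * α⁻¹ := by rw [hz]; push_cast; rfl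
  rw [hu1v, hu2v, hu3v, hzval]
  have hcalc : (x1 + i * y1) * ((γ : F) * α⁻¹) + (x2 + i * y2) * ((γ : F) * α⁻¹) +
      (x3 + i * y3) * ((γ : F) * α⁻¹) =
      ((x1 + x2 + x3) + i * (y1 + y2 + y3)) * ((γ : F) * α⁻¹) := by ring
  rw [hcalc, hsx, hsy, mul_zero, add_zero, mul_comm (γ : F) α⁻¹, ← mul_assoc,
    mul_inv_cancel₀ hα0, one_mul]
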